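/- Let n ≥ 2 and let A = Mₙ(ℂ) be the algebra of n×n complex matrices, regarded as a bimodule over itself. Let m, k be positive integers with m ≠ k. If δ : A → A is an additive map with δ(1) = 0 satisfying (m+k)·δ(XY+YX) = 2m·δ(X)·Y + 2m·δ(Y)·X + 2k·X·δ(Y) + 2k·Y·δ(X) whenever XY = YX = 0, then δ = 0. -/

import Mathlib

open Matrix

/-- Every `(m,k)`-Jordan derivable mapping at zero (with
`δ 1 = 0`, `m ≠ k` positive) on the matrix algebra `Mₙ(ℂ)`, `n ≥ 2`, is zero. -/
theorem mn_jordan_derivable_at_zero_matrix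
    (N : ℕ) (hN : 2 ≤ N)
    (m k : ℕ) (hm : 0 < m) (hk : 0 < k) (hmk : m ≠ k)
    (δ : Matrix (Fin N) (Fin N) ℂ → Matrix (Fin N) (Fin N) ℂ)
    (hadd : ∀ a b, δ (a + b) = δ a + δ b)
    (hδ1 : δ 1 = 0)
    (hzero : ∀ X Y : Matrix (Fin N) (Fin N) ℂ, X * Y = 0 → Y * X = 0 →
      (m + k) • δ (X * Y + Y * X) =
        (2 * m) • (δ X * Y) + (2 * m) • (δ Y * X)
          + (2 * k) • (X * δ Y) + (2 * k) • (Y * δ X)) :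
    ∀ a, δ a = 0 := by
  haveI : Nontrivial (Fin N) := Fin.nontrivial_iff_two_le.mpr hN
  have hm0 : (m:ℂ) ≠ 0 := Nat.cast_ne_zero.mpr hm.ne'
  have hk0 : (k:ℂ) ≠ 0 := Nat.cast_ne_zero.mpr hk.ne'
  have hmk0 : (m:ℂ) ≠ (k:ℂ) := fun h => hmk (Nat.cast_injective h)
  have hmpk : (m:ℂ) + (k:ℂ) ≠ 0 := by
    have : ((m + k : ℕ) : ℂ) ≠ 0 := Nat.cast_ne_zero.mpr (by omega)
    simpa using this
  have hδ0 : δ 0 = 0 := by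
    have h := hadd 0 0
    rw [add_zero] at h
    exact (left_eq_add.mp h)
  have hsub : ∀ a b, δ (a - b) = δ a - δ b := by
    intro a b
    have h := hadd (a - b) b
    rw [sub_add_cancel] at h
    rw [eq_sub_of_add_eq h.symm]
  -- the basic relation over ℂ
  have hrel : ∀ X Y : Matrix (Fin N) (Fin N) ℂ, X * Y = 0 → Y * X = 0 →
      (m:ℂ) • (δ X * Y) + (m:ℂ) • (δ Y * X) + (k:ℂ) • (X * δ Y) + (k:ℂ) • (Y * δ X) = 0 := by
    intro X Y hXY hYX
    have h := hzero X Y hXY hYX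
    rw [hXY, hYX, add_zero, hδ0, smul_zero] at h
    simp only [← Nat.cast_smul_eq_nsmul ℂ, Nat.cast_mul, Nat.cast_ofNat] at h
    have h2 : (2:ℂ) • ((m:ℂ) • (δ X * Y) + (m:ℂ) • (δ Y * X)
        + (k:ℂ) • (X * δ Y) + (k:ℂ) • (Y * δ X)) = 0 := by
      linear_combination (norm := module) -h
    rcases smul_eq_zero.mp h2 with h' | h'
    · exact absurd h' two_ne_zero
    · exact h'
  -- Step 1: δ vanishes on idempotents
  have hidem : ∀ Q : Matrix (Fin N) (Fin N) ℂ, Q * Q = Q → δ Q = 0 := by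
    intro Q hQ
    have hQc : δ (1 - Q) = -(δ Q) := by rw [hsub, hδ1, zero_sub]
    have h := hrel Q (1 - Q) (by rw [mul_sub, mul_one, hQ, sub_self])
      (by rw [sub_mul, one_mul, hQ, sub_self])
    rw [hQc, mul_sub, sub_mul, mul_one, one_mul, neg_mul, mul_neg] at h
    have key : ((m:ℂ) + k) • δ Q = (2*(m:ℂ)) • (δ Q * Q) + (2*(k:ℂ)) • (Q * δ Q) := by
      linear_combination (norm := module) h
    have hQ2 : ∀ Z, Q * (Q * Z) = Q * Z := fun Z => by rw [← mul_assoc, hQ]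
    have hQDQ : Q * (δ Q * Q) = 0 := by
      have h1 := congrArg (fun Z => Q * Z * Q) key
      simp only [mul_add, add_mul, mul_smul_comm, smul_mul_assoc, mul_assoc, hQ, hQ2] at h1
      have h2 : ((m:ℂ) + k) • (Q * (δ Q * Q)) = 0 := by
        linear_combination (norm := module) -h1
      exact (smul_eq_zero.mp h2).resolve_left hmpk
    have hQD : Q * δ Q = 0 := by
      have h1 := congrArg (fun Z => Q * Z) key
      simp only [mul_add, mul_smul_comm, mul_assoc, hQ, hQ2, hQDQ, smul_zero, add_zero] at h1
      have h2 : ((m:ℂ) - k) • (Q * δ Q) = 0 := by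
        linear_combination (norm := module) h1
      exact (smul_eq_zero.mp h2).resolve_left (sub_ne_zero.mpr hmk0)
    have hDQ : δ Q * Q = 0 := by
      have h1 := congrArg (fun Z => Z * Q) key
      simp only [add_mul, smul_mul_assoc, mul_assoc, hQ, hQDQ, mul_zero, smul_zero, add_zero] at h1
      have h2 : ((k:ℂ) - m) • (δ Q * Q) = 0 := by
        linear_combination (norm := module) h1
      exact (smul_eq_zero.mp h2).resolve_left (sub_ne_zero.mpr (Ne.symm hmk0))
    rw [hDQ, hQD, smul_zero, smul_zero, add_zero] at key
    exact (smul_eq_zero.mp key).resolve_left hmpk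
  -- the "dagger" relation
  have hdag : ∀ Q : Matrix (Fin N) (Fin N) ℂ, Q * Q = Q →
      ∀ X : Matrix (Fin N) (Fin N) ℂ, X * Q = X → Q * X = X →
      ((m:ℂ) + k) • δ X = (m:ℂ) • (δ X * Q) + (k:ℂ) • (Q * δ X) := by
    intro Q hQ X hXQ hQX
    have hδQc : δ (1 - Q) = 0 := by rw [hsub, hδ1, hidem Q hQ, sub_zero]
    have h := hrel X (1 - Q) (by rw [mul_sub, mul_one, hXQ, sub_self])
      (by rw [sub_mul, one_mul, hQX, sub_self])
    rw [hδQc, zero_mul, mul_zero, smul_zero, smul_zero, add_zero, add_zero] at h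
    rw [mul_sub, sub_mul, mul_one, one_mul] at h
    linear_combination (norm := module) h
  -- δ vanishes on off-diagonal single-entry matrices
  have hoff : ∀ (i j : Fin N) (c : ℂ), i ≠ j → δ (Matrix.single i j c) = 0 := by
    intro i j c hij
    have hQX : (Matrix.single j j 1 - Matrix.single i j c) *
        (Matrix.single j j 1 - Matrix.single i j c)
        = Matrix.single j j 1 - Matrix.single i j c := by
      simp [sub_mul, mul_sub, Matrix.single_mul_single_same, Matrix.single_mul_single_of_ne, hij.symm]
    have h1 : δ (Matrix.single j j 1) = 0 := hidem _ (by
      simp [Matrix.single_mul_single_same])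
    have h2 : δ (Matrix.single j j 1 - Matrix.single i j c) = 0 := hidem _ hQX
    have h3 := hsub (Matrix.single j j 1) (Matrix.single j j 1 - Matrix.single i j c)
    rw [sub_sub_cancel, h1, h2, sub_zero] at h3
    exact h3
  -- δ vanishes on diagonal single-entry matrices
  have hdiag : ∀ (i : Fin N) (c : ℂ), δ (Matrix.single i i c) = 0 := by
    intro i c
    obtain ⟨j, hj⟩ := exists_ne i
    have hP : (Matrix.single i i 1 : Matrix (Fin N) (Fin N) ℂ) * Matrix.single i i 1
        = Matrix.single i i 1 := by simp [Matrix.single_mul_single_same]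
    have h0 : ((m:ℂ) + k) • δ (Matrix.single i i c)
        = (m:ℂ) • (δ (Matrix.single i i c) * Matrix.single i i 1)
          + (k:ℂ) • (Matrix.single i i 1 * δ (Matrix.single i i c)) := by
      apply hdag _ hP
      · simp [Matrix.single_mul_single_same]
      · simp [Matrix.single_mul_single_same]
    have relA : ∀ j' : Fin N, j' ≠ i →
        (m:ℂ) • (δ (Matrix.single i i c) * Matrix.single i j' 1)
          + (k:ℂ) • (Matrix.single i j' 1 * δ (Matrix.single i i c)) = 0 := by
      intro j' hj'
      have hQ : ((Matrix.single i i 1 + Matrix.single i j' 1 : Matrix (Fin N) (Fin N) ℂ)) *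
          (Matrix.single i i 1 + Matrix.single i j' 1)
          = Matrix.single i i 1 + Matrix.single i j' 1 := by
        simp [add_mul, mul_add, Matrix.single_mul_single_same, Matrix.single_mul_single_of_ne, hj']
      have h1 := hdag _ hQ (Matrix.single i i c + Matrix.single i j' c)
        (by simp [add_mul, mul_add, Matrix.single_mul_single_same, Matrix.single_mul_single_of_ne, hj'])
        (by simp [add_mul, mul_add, Matrix.single_mul_single_same, Matrix.single_mul_single_of_ne, hj', hj'.symm])
      rw [hadd, hoff i j' c (Ne.symm hj'), add_zero] at h1
      rw [mul_add, add_mul] at h1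
      linear_combination (norm := module) h0 - h1
    have relB : ∀ j' : Fin N, j' ≠ i →
        (m:ℂ) • (δ (Matrix.single i i c) * Matrix.single j' i 1)
          + (k:ℂ) • (Matrix.single j' i 1 * δ (Matrix.single i i c)) = 0 := by
      intro j' hj'
      have hQ : ((Matrix.single i i 1 + Matrix.single j' i 1 : Matrix (Fin N) (Fin N) ℂ)) *
          (Matrix.single i i 1 + Matrix.single j' i 1)
          = Matrix.single i i 1 + Matrix.single j' i 1 := by
        simp [add_mul, mul_add, Matrix.single_mul_single_same, Matrix.single_mul_single_of_ne, hj'.symm]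
      have h1 := hdag _ hQ (Matrix.single i i c + Matrix.single j' i c)
        (by simp [add_mul, mul_add, Matrix.single_mul_single_same, Matrix.single_mul_single_of_ne, hj', hj'.symm])
        (by simp [add_mul, mul_add, Matrix.single_mul_single_same, Matrix.single_mul_single_of_ne, hj'.symm])
      rw [hadd, hoff j' i c hj', add_zero] at h1
      rw [mul_add, add_mul] at h1
      linear_combination (norm := module) h0 - h1
    -- T i i = 0
    have Tii : δ (Matrix.single i i c) i i = 0 := by
      have eA := congrFun (congrFun (relA j hj) i) j
      simp only [Matrix.add_apply, Matrix.smul_apply, Matrix.zero_apply, smul_eq_mul,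
        Matrix.mul_single_apply_same, Matrix.single_mul_apply_same,
        mul_one, one_mul] at eA
      have eB := congrFun (congrFun (relB j hj) j) i
      simp only [Matrix.add_apply, Matrix.smul_apply, Matrix.zero_apply, smul_eq_mul,
        Matrix.mul_single_apply_same, Matrix.single_mul_apply_same,
        mul_one, one_mul] at eB
      have hfac : ((m:ℂ) * m - k * k) * δ (Matrix.single i i c) i i = 0 := by
        linear_combination (m:ℂ) * eA - (k:ℂ) * eB
      have hne : ((m:ℂ) * m - k * k) ≠ 0 := by
        have h2 : ((m:ℂ) - k) * ((m:ℂ) + k) ≠ 0 :=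
          mul_ne_zero (sub_ne_zero.mpr hmk0) hmpk
        intro h
        exact h2 (by linear_combination h)
      exact (mul_eq_zero.mp hfac).resolve_left hne
    ext a b
    rw [Matrix.zero_apply]
    by_cases ha : a = i
    · subst ha
      by_cases hb : b = a
      · subst hb; exact Tii
      · have e := congrFun (congrFun (relB b hb) b) b
        simp only [Matrix.add_apply, Matrix.smul_apply, Matrix.zero_apply, smul_eq_mul,
          Matrix.single_mul_apply_same,
          Matrix.mul_single_apply_of_ne (hbj := hb),
          mul_zero, zero_add, one_mul] at e
        exact (mul_eq_zero.mp e).resolve_left hk0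
    · have e := congrFun (congrFun (relA a ha) i) b
      by_cases hb : b = a
      · subst hb
        simp only [Matrix.add_apply, Matrix.smul_apply, Matrix.zero_apply, smul_eq_mul,
          Matrix.single_mul_apply_same, Matrix.mul_single_apply_same,
          mul_one, one_mul, Tii, mul_zero, zero_add] at e
        exact (mul_eq_zero.mp e).resolve_left hk0
      · simp only [Matrix.add_apply, Matrix.smul_apply, Matrix.zero_apply, smul_eq_mul,
          Matrix.single_mul_apply_same,
          Matrix.mul_single_apply_of_ne (hbj := hb),
          mul_zero, zero_add, one_mul] at e
        exact (mul_eq_zero.mp e).resolve_left hk0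
  -- assemble
  have hent : ∀ (i j : Fin N) (c : ℂ), δ (Matrix.single i j c) = 0 := by
    intro i j c
    by_cases h : i = j
    · subst h; exact hdiag i c
    · exact hoff i j c h
  intro a
  have hsum : ∀ {α : Type} (s : Finset α) (f : α → Matrix (Fin N) (Fin N) ℂ),
      δ (∑ x ∈ s, f x) = ∑ x ∈ s, δ (f x) := by
    intro α s f
    exact map_sum (AddMonoidHom.mk' δ hadd) f s
  conv_lhs => rw [matrix_eq_sum_single a]
  rw [hsum]
  apply Finset.sum_eq_zero
  intro i _
  rw [hsum]
  apply Finset.sum_eq_zero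
  intro j _
  exact hent i j (a i j)
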